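/- If λ ∈ W(c) is an extreme point of the numerical range of a bounded operator c, then M_λ = {x ∈ H : ⟨c x, x⟩ = λ‖x‖²} is a linear subspace of H. -/

import Mathlib

open scoped InnerProductSpace

/-- If `λ` is an extreme point of the numerical range of a bounded operator
`c`, then `M_λ = {x : ⟨c x, x⟩ = λ ‖x‖²}` is a linear subspace of `H`. -/
theorem Mlambda_submodule_of_extremePoint
    {H : Type*} [NormedAddCommGroup H] [InnerProductSpace ℂ H]
    (c : H →L[ℂ] H) (lam : ℂ)
    (hlam : lam ∈ Set.extremePoints ℝ {z : ℂ | ∃ x : H, ‖x‖ = 1 ∧ ⟪x, c x⟫_ℂ = z}) :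
    ∃ S : Submodule ℂ H,
      {x : H | ⟪x, c x⟫_ℂ = lam * (‖x‖ : ℂ) ^ 2} = (S : Set H) := by
  obtain ⟨hlamW, hext⟩ := hlam
  have memW : ∀ u : H, u ≠ 0 →
      (⟪u, c u⟫_ℂ / (‖u‖ : ℂ) ^ 2) ∈ {z : ℂ | ∃ x : H, ‖x‖ = 1 ∧ ⟪x, c x⟫_ℂ = z} := by
    intro u hu
    have hn : ‖u‖ ≠ 0 := norm_ne_zero_iff.mpr hu
    have hnc : (‖u‖ : ℂ) ≠ 0 := by exact_mod_cast hn
    refine ⟨((‖u‖ : ℂ))⁻¹ • u, ?_, ?_⟩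
    · rw [norm_smul]
      simp [inv_mul_cancel₀ hn]
    · rw [map_smul, inner_smul_left, inner_smul_right]
      rw [map_inv₀, Complex.conj_ofReal]
      field_simp
  have hsmul : ∀ (a : ℂ) (x : H), ⟪x, c x⟫_ℂ = lam * (‖x‖ : ℂ) ^ 2 →
      ⟪a • x, c (a • x)⟫_ℂ = lam * (‖a • x‖ : ℂ) ^ 2 := by
    intro a x hx
    rw [map_smul, inner_smul_left, inner_smul_right, hx, norm_smul]
    push_cast
    rw [← mul_assoc, Complex.conj_mul']
    ring
  have hadd : ∀ (x y : H), ⟪x, c x⟫_ℂ = lam * (‖x‖ : ℂ) ^ 2 →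
      ⟪y, c y⟫_ℂ = lam * (‖y‖ : ℂ) ^ 2 →
      ⟪x + y, c (x + y)⟫_ℂ = lam * (‖x + y‖ : ℂ) ^ 2 := by
    intro x y hx hy
    by_cases huz : x + y = 0
    · rw [huz]; simp
    by_cases hvz : x - y = 0
    · have hxy : y = x := (sub_eq_zero.mp hvz).symm
      have h2 : x + y = (2 : ℂ) • x := by rw [hxy]; module
      rw [h2]
      exact hsmul 2 x hx
    have hun : ‖x + y‖ ≠ 0 := norm_ne_zero_iff.mpr huz
    have hvn : ‖x - y‖ ≠ 0 := norm_ne_zero_iff.mpr hvz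
    have hpar : ‖x + y‖ ^ 2 + ‖x - y‖ ^ 2 = 2 * (‖x‖ ^ 2 + ‖y‖ ^ 2) := by
      have := parallelogram_law_with_norm ℂ x y
      nlinarith [this]
    have hsum : ⟪x + y, c (x + y)⟫_ℂ + ⟪x - y, c (x - y)⟫_ℂ
        = lam * ((‖x + y‖ : ℂ) ^ 2 + (‖x - y‖ : ℂ) ^ 2) := by
      have h1 : ⟪x + y, c (x + y)⟫_ℂ + ⟪x - y, c (x - y)⟫_ℂ
          = 2 * ⟪x, c x⟫_ℂ + 2 * ⟪y, c y⟫_ℂ := by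
        simp only [map_add, map_sub, inner_add_left, inner_add_right,
          inner_sub_left, inner_sub_right]
        ring
      have h2 : ((‖x + y‖ : ℂ) ^ 2 + (‖x - y‖ : ℂ) ^ 2)
          = ((‖x + y‖ ^ 2 + ‖x - y‖ ^ 2 : ℝ) : ℂ) := by push_cast; ring
      rw [h1, hx, hy, h2, hpar]
      push_cast
      ring
    set D : ℝ := ‖x + y‖ ^ 2 + ‖x - y‖ ^ 2 with hD
    have hDpos : 0 < D := by positivity
    have hDc : (D : ℂ) ≠ 0 := by exact_mod_cast hDpos.ne'
    have huc : ((‖x + y‖ : ℂ)) ^ 2 ≠ 0 := by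
      exact pow_ne_zero 2 (by exact_mod_cast hun)
    have hvc : ((‖x - y‖ : ℂ)) ^ 2 ≠ 0 := by
      exact pow_ne_zero 2 (by exact_mod_cast hvn)
    set w1 : ℂ := ⟪x + y, c (x + y)⟫_ℂ / (‖x + y‖ : ℂ) ^ 2 with hw1
    set w2 : ℂ := ⟪x - y, c (x - y)⟫_ℂ / (‖x - y‖ : ℂ) ^ 2 with hw2
    have hseg : lam ∈ openSegment ℝ w1 w2 := by
      refine ⟨‖x + y‖ ^ 2 / D, ‖x - y‖ ^ 2 / D, by positivity, by positivity,
        by field_simp; exact hD.symm, ?_⟩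
      have e1 : ((‖x + y‖ ^ 2 / D : ℝ) : ℂ) * w1 = ⟪x + y, c (x + y)⟫_ℂ / (D : ℂ) := by
        rw [hw1]; push_cast; field_simp; rw [mul_comm, mul_div_assoc, div_self (by exact_mod_cast hun), mul_one]
      have e2 : ((‖x - y‖ ^ 2 / D : ℝ) : ℂ) * w2 = ⟪x - y, c (x - y)⟫_ℂ / (D : ℂ) := by
        rw [hw2]; push_cast; field_simp; rw [mul_comm, mul_div_assoc, div_self (by exact_mod_cast hvn), mul_one]
      have eD : ((‖x + y‖ : ℂ) ^ 2 + (‖x - y‖ : ℂ) ^ 2) = (D : ℂ) := by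
        rw [hD]; push_cast; ring
      rw [Complex.real_smul, Complex.real_smul, e1, e2, ← add_div, hsum, eD,
        mul_div_assoc, div_self hDc, mul_one]
    have h1 := hext (memW (x + y) huz) (memW (x - y) hvz) hseg
    rw [div_eq_iff huc] at h1
    exact h1
  refine ⟨{ carrier := {x : H | ⟪x, c x⟫_ℂ = lam * (‖x‖ : ℂ) ^ 2},
            zero_mem' := by simp,
            smul_mem' := fun a x hx => hsmul a x hx,
            add_mem' := fun {x y} hx hy => hadd x y hx hy }, rfl⟩
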